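/- Let K be a field of characteristic 0, r : K → K an automorphism, e ∈ K^× and δ ∈ K^×. Suppose that whenever δ is of the form ω·g/r(g) with ω a root of unity and g ∈ K^×, it is in fact of the form g/r(g); and suppose that the only roots of unity in K of the form f/r(f) equal 1 (condition (S2)); and suppose that α_r(f,n)=1 implies f is an n-th root of unity lying in the fixed field of r (condition (S1)). Then for every n ≥ 1, the sum S_n = Σ_{i=0}^{n-1} α_r(δ,i)·r^i(e) is nonzero. -/

import Mathlib

/-- `α_r(f,n) = f · r(f) ⋯ r^{n-1}(f)`. -/
def alpha {K : Type*} [Field K] (r : K ≃+* K) (f : K) (n : ℕ) : K :=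
  ∏ i ∈ Finset.range n, (r ^ i) f

@[simp] lemma alpha_zero {K : Type*} [Field K] (r : K ≃+* K) (f : K) :
    alpha r f 0 = 1 := by simp [alpha]

lemma alpha_succ {K : Type*} [Field K] (r : K ≃+* K) (f : K) (n : ℕ) :
    alpha r f (n + 1) = alpha r f n * (r ^ n) f :=
  Finset.prod_range_succ _ _

lemma alpha_mul {K : Type*} [Field K] (r : K ≃+* K) (f g : K) (n : ℕ) :
    alpha r (f * g) n = alpha r f n * alpha r g n := by
  simp [alpha, Finset.prod_mul_distrib]

@[simp] lemma ringEquiv_one_apply {K : Type*} [Field K] (x : K) :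
    (1 : K ≃+* K) x = x := rfl

lemma pow_apply_ne_zero {K : Type*} [Field K] (r : K ≃+* K) {x : K} (hx : x ≠ 0) (i : ℕ) :
    (r ^ i) x ≠ 0 := by exact (map_ne_zero (r ^ i)).mpr hx

lemma alpha_tau {K : Type*} [Field K] (r : K ≃+* K) {e : K} (he : e ≠ 0) (n : ℕ) :
    alpha r (e / r e) n = e / (r ^ n) e := by
  induction n with
  | zero => simp [alpha, div_self he]
  | succ n ih =>
      rw [alpha_succ, ih, map_div₀]
      have h1 : (r ^ n) e ≠ 0 := pow_apply_ne_zero r he n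
      have h2 : (r ^ n) (r e) = (r ^ (n + 1)) e := by rw [pow_succ]; rfl
      have h3 : (r ^ (n + 1)) e ≠ 0 := pow_apply_ne_zero r he (n + 1)
      rw [h2]
      field_simp

lemma alpha_tau' {K : Type*} [Field K] (r : K ≃+* K) {e : K} (he : e ≠ 0) (n : ℕ) :
    alpha r (r e / e) n = (r ^ n) e / e := by
  induction n with
  | zero => simp [alpha, div_self he]
  | succ n ih =>
      rw [alpha_succ, ih, map_div₀]
      have h1 : (r ^ n) e ≠ 0 := pow_apply_ne_zero r he n
      have h2 : (r ^ n) (r e) = (r ^ (n + 1)) e := by rw [pow_succ]; rfl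
      rw [h2]
      field_simp

theorem stmt_18 {K : Type*} [Field K] [CharZero K] (r : K ≃+* K)
    (e δ : K) (he : e ≠ 0) (hδ0 : δ ≠ 0)
    (hδ : (∃ (ω g : K), g ≠ 0 ∧ (∃ n : ℕ, 1 ≤ n ∧ ω ^ n = 1) ∧ δ = ω * (g / r g)) →
      ∃ g : K, g ≠ 0 ∧ δ = g / r g)
    (hS2 : ∀ f : K, f ≠ 0 → (∃ n : ℕ, 1 ≤ n ∧ (f / r f) ^ n = 1) → f / r f = 1)
    (hS1 : ∀ f : K, f ≠ 0 → ∀ n : ℕ, 1 ≤ n → alpha r f n = 1 →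
      f ^ n = 1 ∧ r f = f) :
    ∀ n : ℕ, 1 ≤ n → (∑ i ∈ Finset.range n, alpha r δ i * (r ^ i) e) ≠ 0 := by
  intro n hn hS
  have hre : r e ≠ 0 := by simpa using he
  -- Key identity consequence: alpha r δ n * (r^n) e = e
  have h1 : δ * r (∑ i ∈ Finset.range n, alpha r δ i * (r ^ i) e)
      = ∑ i ∈ Finset.range n, alpha r δ (i + 1) * (r ^ (i + 1)) e := by
    rw [map_sum, Finset.mul_sum]
    refine Finset.sum_congr rfl fun i _ => ?_
    rw [map_mul]
    have ha : δ * r (alpha r δ i) = alpha r δ (i + 1) := by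
      unfold alpha
      rw [map_prod, Finset.prod_range_succ']
      have : ∀ j, r ((r ^ j) δ) = (r ^ (j + 1)) δ := fun j => by rw [pow_succ']; rfl
      simp only [this, pow_zero, ringEquiv_one_apply]
      ring
    have hb : r ((r ^ i) e) = (r ^ (i + 1)) e := by rw [pow_succ']; rfl
    rw [← ha, hb]; ring
  rw [hS, map_zero, mul_zero] at h1
  have key : alpha r δ n * (r ^ n) e = e := by
    have h2 := Finset.sum_range_succ' (fun i => alpha r δ i * (r ^ i) e) n
    rw [Finset.sum_range_succ, hS, ← h1] at h2
    simp only [alpha_zero, zero_add, pow_zero, ringEquiv_one_apply, one_mul] at h2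
    exact h2
  have hrn : (r ^ n) e ≠ 0 := pow_apply_ne_zero r he n
  -- f := δ * (r e / e) satisfies alpha r f n = 1
  set f : K := δ * (r e / e) with hf
  have hf0 : f ≠ 0 := by
    rw [hf]; exact mul_ne_zero hδ0 (div_ne_zero hre he)
  have halt : alpha r f n = 1 := by
    rw [hf, alpha_mul, alpha_tau' r he]
    have : alpha r δ n = e / (r ^ n) e := by
      field_simp
      linear_combination key
    rw [this]
    field_simp
  obtain ⟨hfn, hrf⟩ := hS1 f hf0 n hn halt
  -- δ = f * (e / r e), so by hδ, δ = g / r g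
  obtain ⟨g, hg0, hgd⟩ := hδ ⟨f, e, he, ⟨n, hn, hfn⟩, by rw [hf]; field_simp⟩
  have hrg : r g ≠ 0 := by simpa using hg0
  -- f = h / r h with h = g / e, so by hS2, f = 1
  have hfh : (g / e) / r (g / e) = f := by
    rw [map_div₀, hf, hgd]
    field_simp
  have hf1 : f = 1 := by
    rw [← hfh]
    exact hS2 (g / e) (div_ne_zero hg0 he) ⟨n, hn, by rw [hfh]; exact hfn⟩
  have hδe : δ = e / r e := by
    have h := hf1
    rw [hf] at h
    field_simp at h
    rw [eq_div_iff hre]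
    linear_combination h
  -- Then each summand equals e, so the sum is n • e ≠ 0
  have hconst : ∀ i ∈ Finset.range n, alpha r δ i * (r ^ i) e = e := by
    intro i _
    rw [hδe, alpha_tau r he, div_mul_cancel₀ _ (pow_apply_ne_zero r he i)]
  rw [Finset.sum_congr rfl hconst, Finset.sum_const, Finset.card_range, nsmul_eq_mul] at hS
  rcases mul_eq_zero.mp hS with h | h
  · exact absurd (Nat.cast_eq_zero.mp h) (by omega)
  · exact he h
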